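/- The zero set of the cubic form α_{0,n}(x) = Σ_{i<j<k} x_i x_j x_k + Σ_{i<j} x_i x_j + Σ_i x_i on (Z/2)^n has cardinality equal to the number of vectors of Hamming weight divisible by 4, namely Σ_{j ≡ 0 mod 4} C(n, j). -/

import Mathlib

section Aux
open Finset

variable {α : Type*} [LinearOrder α] [DecidableEq α]

lemma pairs_card (S : Finset α) :
    ((S ×ˢ S).filter fun p => p.1 < p.2).card = S.card.choose 2 := by
  induction S using Finset.induction_on_max with
  | empty => simp
  | insert a S ha ih =>
    have hna : a ∉ S := fun h => lt_irrefl a (ha a h)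
    have hset : ((insert a S ×ˢ insert a S).filter fun p => p.1 < p.2)
        = ((S ×ˢ S).filter fun p => p.1 < p.2) ∪ S.image (fun b => (b, a)) := by
      ext ⟨b, c⟩
      simp only [mem_filter, mem_product, mem_insert, mem_union, mem_image, Prod.mk.injEq]
      constructor
      · rintro ⟨⟨hb | hb, hc | hc⟩, hlt⟩
        · subst hb; subst hc; exact absurd hlt (lt_irrefl _)
        · subst hb; exact absurd hlt (not_lt.2 (ha c hc).le)
        · subst hc; exact Or.inr ⟨b, hb, rfl, rfl⟩
        · exact Or.inl ⟨⟨hb, hc⟩, hlt⟩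
      · rintro (⟨⟨hb, hc⟩, hlt⟩ | ⟨d, hd, rfl, rfl⟩)
        · exact ⟨⟨Or.inr hb, Or.inr hc⟩, hlt⟩
        · exact ⟨⟨Or.inr hd, Or.inl rfl⟩, ha d hd⟩
    have hdisj : Disjoint ((S ×ˢ S).filter fun p => p.1 < p.2)
        (S.image (fun b => (b, a))) := by
      rw [Finset.disjoint_left]
      rintro ⟨b, c⟩ hbc hbc'
      simp only [mem_filter, mem_product] at hbc
      simp only [mem_image, Prod.mk.injEq] at hbc'
      obtain ⟨d, hd, rfl, rfl⟩ := hbc'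
      exact hna hbc.1.2
    rw [hset, card_union_of_disjoint hdisj, ih,
      card_image_of_injective _ (fun x y h => (Prod.mk.injEq _ _ _ _ ▸ h).1),
      card_insert_of_notMem hna]
    have := Nat.choose_succ_succ S.card 1
    simp [Nat.choose_succ_succ, Nat.add_comm]

lemma triples_card (S : Finset α) :
    ((S ×ˢ S ×ˢ S).filter fun t => t.1 < t.2.1 ∧ t.2.1 < t.2.2).card = S.card.choose 3 := by
  induction S using Finset.induction_on_max with
  | empty => simp
  | insert a S ha ih =>
    have hna : a ∉ S := fun h => lt_irrefl a (ha a h)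
    have hset : ((insert a S ×ˢ insert a S ×ˢ insert a S).filter
          fun t => t.1 < t.2.1 ∧ t.2.1 < t.2.2)
        = ((S ×ˢ S ×ˢ S).filter fun t => t.1 < t.2.1 ∧ t.2.1 < t.2.2)
          ∪ ((S ×ˢ S).filter fun p => p.1 < p.2).image (fun p => (p.1, p.2, a)) := by
      ext ⟨b, c, d⟩
      simp only [mem_filter, mem_product, mem_insert, mem_union, mem_image, Prod.mk.injEq]
      constructor
      · rintro ⟨⟨hb | hb, hc | hc, hd | hd⟩, h1, h2⟩
        · subst hb; subst hc; exact absurd h1 (lt_irrefl _)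
        · subst hb; subst hc; exact absurd h1 (lt_irrefl _)
        · subst hb; exact absurd h1 (not_lt.2 (ha c hc).le)
        · subst hb; exact absurd h1 (not_lt.2 (ha c hc).le)
        · subst hc; subst hd; exact absurd h2 (lt_irrefl _)
        · subst hc; exact absurd h2 (not_lt.2 (ha d hd).le)
        · exact Or.inr ⟨(b, c), ⟨⟨hb, hc⟩, h1⟩, rfl, rfl, hd.symm⟩
        · exact Or.inl ⟨⟨hb, hc, hd⟩, h1, h2⟩
      · rintro (⟨⟨hb, hc, hd⟩, h1, h2⟩ | ⟨⟨b', c'⟩, ⟨⟨hb, hc⟩, h1⟩, rfl, rfl, rfl⟩)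
        · exact ⟨⟨Or.inr hb, Or.inr hc, Or.inr hd⟩, h1, h2⟩
        · exact ⟨⟨Or.inr hb, Or.inr hc, Or.inl rfl⟩, h1, ha _ hc⟩
    have hdisj : Disjoint ((S ×ˢ S ×ˢ S).filter fun t => t.1 < t.2.1 ∧ t.2.1 < t.2.2)
        (((S ×ˢ S).filter fun p => p.1 < p.2).image (fun p => (p.1, p.2, a))) := by
      rw [Finset.disjoint_left]
      rintro ⟨b, c, d⟩ hbc hbc'
      simp only [mem_filter, mem_product] at hbc
      simp only [mem_image, Prod.mk.injEq] at hbc'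
      obtain ⟨⟨b', c'⟩, _, rfl, rfl, rfl⟩ := hbc'
      exact hna hbc.1.2.2
    have hinj : Set.InjOn (fun p : α × α => (p.1, p.2, a))
        ((S ×ˢ S).filter fun p => p.1 < p.2) := by
      rintro ⟨b, c⟩ _ ⟨b', c'⟩ _ h
      simp only [Prod.mk.injEq] at h
      simp [h.1, h.2.1]
    rw [hset, card_union_of_disjoint hdisj, ih, card_image_of_injOn hinj, pairs_card,
      card_insert_of_notMem hna]
    simp [Nat.choose_succ_succ, Nat.add_comm]


lemma choose_parity (w : ℕ) :
    (w % 4 = 0 → w.choose 2 % 2 = 0 ∧ w.choose 3 % 2 = 0) ∧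
    (w % 4 = 1 → w.choose 2 % 2 = 0 ∧ w.choose 3 % 2 = 0) ∧
    (w % 4 = 2 → w.choose 2 % 2 = 1 ∧ w.choose 3 % 2 = 0) ∧
    (w % 4 = 3 → w.choose 2 % 2 = 1 ∧ w.choose 3 % 2 = 1) := by
  induction w with
  | zero => simp
  | succ w ih =>
    have e2 : (w + 1).choose 2 = w + w.choose 2 := by
      rw [Nat.choose_succ_succ w 1, Nat.choose_one_right]
    have e3 : (w + 1).choose 3 = w.choose 2 + w.choose 3 := Nat.choose_succ_succ w 2
    omega

lemma key_parity (w : ℕ) : (w.choose 3 + w.choose 2 + w) % 2 = 0 ↔ w % 4 = 0 := by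
  have h := choose_parity w
  omega




lemma zmod2_cases : ∀ a : ZMod 2, a = 0 ∨ a = 1 := by decide


end Aux

/-- The cubic form `α_{0,n}(x) = Σ_{i<j<k} x_ix_jx_k + Σ_{i<j} x_ix_j + Σ_i x_i`. -/
def cubicFormOn (n : ℕ) (x : Fin n → ZMod 2) : ZMod 2 :=
  (∑ t ∈ Finset.univ.filter
      (fun t : Fin n × Fin n × Fin n => t.1 < t.2.1 ∧ t.2.1 < t.2.2),
      x t.1 * x t.2.1 * x t.2.2)
  + (∑ t ∈ Finset.univ.filter (fun t : Fin n × Fin n => t.1 < t.2),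
      x t.1 * x t.2)
  + ∑ i, x i

lemma cubic_eq (n : ℕ) (x : Fin n → ZMod 2) :
    cubicFormOn n x =
      ((((Finset.univ.filter fun i => x i = 1).card.choose 3
        + (Finset.univ.filter fun i => x i = 1).card.choose 2
        + (Finset.univ.filter fun i => x i = 1).card : ℕ)) : ZMod 2) := by
  classical
  set S : Finset (Fin n) := Finset.univ.filter fun i => x i = 1 with hS
  have hx : ∀ i, x i = if i ∈ S then 1 else 0 := by
    intro i
    rcases zmod2_cases (x i) with h | h <;> simp [hS, h]
  have h1 : (∑ i, x i) = (S.card : ZMod 2) := by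
    rw [← Finset.sum_boole]
    exact Finset.sum_congr rfl fun i _ => by rw [hx i]; simp [hS]
  have h2 : (∑ t ∈ Finset.univ.filter (fun t : Fin n × Fin n => t.1 < t.2),
      x t.1 * x t.2) = ((S.card.choose 2 : ℕ) : ZMod 2) := by
    calc (∑ t ∈ Finset.univ.filter (fun t : Fin n × Fin n => t.1 < t.2), x t.1 * x t.2)
        = ∑ t ∈ Finset.univ.filter (fun t : Fin n × Fin n => t.1 < t.2),
            (if t ∈ S ×ˢ S then (1 : ZMod 2) else 0) := by
          apply Finset.sum_congr rfl
          intro t _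
          rw [hx t.1, hx t.2]
          by_cases hb : t.1 ∈ S <;> by_cases hc : t.2 ∈ S <;>
            simp [Finset.mem_product, hb, hc]
      _ = ∑ t ∈ (Finset.univ.filter (fun t : Fin n × Fin n => t.1 < t.2)) ∩ (S ×ˢ S),
            (1 : ZMod 2) := Finset.sum_ite_mem _ _ _
      _ = (((Finset.univ.filter (fun t : Fin n × Fin n => t.1 < t.2)) ∩ (S ×ˢ S)).card :
            ZMod 2) := by simp
      _ = ((S.card.choose 2 : ℕ) : ZMod 2) := by
          rw [show (Finset.univ.filter (fun t : Fin n × Fin n => t.1 < t.2)) ∩ (S ×ˢ S)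
              = (S ×ˢ S).filter (fun p => p.1 < p.2) by
            ext t
            simp only [Finset.mem_inter, Finset.mem_filter, Finset.mem_product,
              Finset.mem_univ, true_and]
            tauto]
          rw [pairs_card S]
  have h3 : (∑ t ∈ Finset.univ.filter
      (fun t : Fin n × Fin n × Fin n => t.1 < t.2.1 ∧ t.2.1 < t.2.2),
      x t.1 * x t.2.1 * x t.2.2) = ((S.card.choose 3 : ℕ) : ZMod 2) := by
    calc (∑ t ∈ Finset.univ.filter
          (fun t : Fin n × Fin n × Fin n => t.1 < t.2.1 ∧ t.2.1 < t.2.2),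
          x t.1 * x t.2.1 * x t.2.2)
        = ∑ t ∈ Finset.univ.filter
            (fun t : Fin n × Fin n × Fin n => t.1 < t.2.1 ∧ t.2.1 < t.2.2),
            (if t ∈ S ×ˢ S ×ˢ S then (1 : ZMod 2) else 0) := by
          apply Finset.sum_congr rfl
          intro t _
          rw [hx t.1, hx t.2.1, hx t.2.2]
          by_cases hb : t.1 ∈ S <;> by_cases hc : t.2.1 ∈ S <;> by_cases hd : t.2.2 ∈ S <;>
            simp [Finset.mem_product, hb, hc, hd]
      _ = ∑ t ∈ (Finset.univ.filter
            (fun t : Fin n × Fin n × Fin n => t.1 < t.2.1 ∧ t.2.1 < t.2.2))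
            ∩ (S ×ˢ S ×ˢ S), (1 : ZMod 2) := Finset.sum_ite_mem _ _ _
      _ = (((Finset.univ.filter
            (fun t : Fin n × Fin n × Fin n => t.1 < t.2.1 ∧ t.2.1 < t.2.2))
            ∩ (S ×ˢ S ×ˢ S)).card : ZMod 2) := by simp
      _ = ((S.card.choose 3 : ℕ) : ZMod 2) := by
          rw [show (Finset.univ.filter
              (fun t : Fin n × Fin n × Fin n => t.1 < t.2.1 ∧ t.2.1 < t.2.2))
              ∩ (S ×ˢ S ×ˢ S)
              = (S ×ˢ S ×ˢ S).filter (fun t => t.1 < t.2.1 ∧ t.2.1 < t.2.2) by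
            ext t
            simp only [Finset.mem_inter, Finset.mem_filter, Finset.mem_product,
              Finset.mem_univ, true_and]
            tauto]
          rw [triples_card S]
  rw [cubicFormOn, h1, h2, h3]
  push_cast
  ring

lemma weight_count (n j : ℕ) :
    (Finset.univ.filter fun x : Fin n → ZMod 2 =>
      (Finset.univ.filter fun i => x i = 1).card = j).card = n.choose j := by
  classical
  have hpc : ((Finset.univ : Finset (Fin n)).powersetCard j).card = n.choose j := by
    simp [Finset.card_powersetCard]
  rw [← hpc]
  apply Finset.card_bij (fun x _ => Finset.univ.filter fun i => x i = 1)
  · intro x hx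
    simp only [Finset.mem_filter, Finset.mem_univ, true_and] at hx
    rw [Finset.mem_powersetCard]
    exact ⟨Finset.subset_univ _, hx⟩
  · intro x hx y hy heq
    funext i
    have hi : (x i = 1) ↔ (y i = 1) := by
      have := Finset.ext_iff.1 heq i
      simpa using this
    rcases zmod2_cases (x i) with h | h <;> rcases zmod2_cases (y i) with h' | h' <;>
      simp_all
  · intro t ht
    rw [Finset.mem_powersetCard] at ht
    refine ⟨fun i => if i ∈ t then 1 else 0, ?_, ?_⟩
    · simp only [Finset.mem_filter, Finset.mem_univ, true_and]
      rw [show (Finset.univ.filter fun i => (if i ∈ t then (1 : ZMod 2) else 0) = 1) = t by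
        ext i
        simp only [Finset.mem_filter, Finset.mem_univ, true_and]
        by_cases hi : i ∈ t <;> simp [hi]]
      exact ht.2
    · ext i
      simp only [Finset.mem_filter, Finset.mem_univ, true_and]
      by_cases hi : i ∈ t <;> simp [hi]

/-- the zero set of `α_{0,n}` on `(ℤ/2)^n` has cardinality
`Σ_{j ≡ 0 (4)} C(n,j)`, the number of vectors of Hamming weight divisible by 4. -/
theorem stmt_18 (n : ℕ) :
    (Finset.univ.filter
        (fun x : Fin n → ZMod 2 => cubicFormOn n x = 0)).card
      = ∑ j ∈ (Finset.range (n + 1)).filter (fun j => j % 4 = 0),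
          Nat.choose n j := by
  classical
  have hfe : (Finset.univ.filter fun x : Fin n → ZMod 2 => cubicFormOn n x = 0)
      = Finset.univ.filter
          (fun x => (Finset.univ.filter fun i => x i = 1).card % 4 = 0) := by
    apply Finset.filter_congr
    intro x _
    rw [cubic_eq, ZMod.natCast_eq_zero_iff]
    have := key_parity ((Finset.univ.filter fun i => x i = 1).card)
    constructor <;> intro h <;> omega
  have heq : Finset.univ.filter
        (fun x : Fin n → ZMod 2 => (Finset.univ.filter fun i => x i = 1).card % 4 = 0)
      = ((Finset.range (n + 1)).filter (fun j => j % 4 = 0)).biUnion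
          (fun j => Finset.univ.filter fun x : Fin n → ZMod 2 =>
            (Finset.univ.filter fun i => x i = 1).card = j) := by
    ext x
    simp only [Finset.mem_filter, Finset.mem_biUnion, Finset.mem_range, Finset.mem_univ,
      true_and]
    constructor
    · intro h
      exact ⟨_, ⟨Nat.lt_succ_of_le ((Finset.card_filter_le _ _).trans (by simp)), h⟩, rfl⟩
    · rintro ⟨j, ⟨-, hj⟩, hw⟩
      rw [hw]; exact hj
  rw [hfe, heq, Finset.card_biUnion]
  · exact Finset.sum_congr rfl fun j _ => weight_count n j
  · intro j hj k hk hjk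
    rw [Function.onFun, Finset.disjoint_left]
    intro x hx1 hx2
    simp only [Finset.mem_filter, Finset.mem_univ, true_and] at hx1 hx2
    exact hjk (hx1 ▸ hx2 ▸ rfl)
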